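/- Let G = (μ,V,W,E,P,f,g) be a maximal GCD graph with edge density δ > 0, and let s ≥ 1 and t ≥ C₆·s be real numbers. Assume that R♭(G) = ∅ and that E ⊆ {(v,w) ∈ V×W : L_t(v,w) ≥ 1/s}, where L_t(v,w) = ∑_{p prime, p | vw/gcd(v,w)², p > t} 1/p. Then there exists a GCD subgraph G' = (μ,V,W,E',P,f,g) of G such that q(G') ≥ q(G)/2 > 0 and E' ⊆ {(v,w) ∈ V×W : ∑_{p | vw/gcd(v,w)², p > t, p ∉ R(G)} 1/p ≥ 1/(2s)}. -/

import Mathlib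

open Finset

/-- A (bipartite) GCD graph: a measure `μ` on `ℕ`, finite vertex sets `V, W` of positive
integers, an edge set `E ⊆ V × W`, a (finite) set of primes `P`, and exponent functions
`f, g` such that for every `p ∈ P`: `p^{f(p)} ∣ v` for all `v ∈ V`, `p^{g(p)} ∣ w` for all
`w ∈ W`, and `p^{min(f(p),g(p))}` exactly divides `gcd(v, w)` for every edge `(v, w)`. -/
structure GCDGraph where
  mu : ℕ → ℝ
  mu_nonneg : ∀ n, 0 ≤ mu n
  V : Finset ℕ
  W : Finset ℕ
  V_pos : ∀ v ∈ V, 0 < v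
  W_pos : ∀ w ∈ W, 0 < w
  E : Finset (ℕ × ℕ)
  E_sub : E ⊆ V ×ˢ W
  P : Finset ℕ
  P_prime : ∀ p ∈ P, p.Prime
  f : ℕ → ℕ
  g : ℕ → ℕ
  f_dvd : ∀ p ∈ P, ∀ v ∈ V, p ^ f p ∣ v
  g_dvd : ∀ p ∈ P, ∀ w ∈ W, p ^ g p ∣ w
  gcd_exact : ∀ p ∈ P, ∀ e ∈ E,
    p ^ min (f p) (g p) ∣ Nat.gcd e.1 e.2 ∧ ¬ p ^ (min (f p) (g p) + 1) ∣ Nat.gcd e.1 e.2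

namespace GCDGraph

/-- The measure of a finite set of integers: `μ(S) = ∑_{n ∈ S} μ(n)`. -/
noncomputable def muSet (mu : ℕ → ℝ) (S : Finset ℕ) : ℝ := ∑ n ∈ S, mu n

/-- The measure of a finite set of pairs: `μ(E) = ∑_{(n₁,n₂) ∈ E} μ(n₁) μ(n₂)`. -/
noncomputable def muEdges (mu : ℕ → ℝ) (E : Finset (ℕ × ℕ)) : ℝ := ∑ e ∈ E, mu e.1 * mu e.2

/-- Edge density `δ = μ(E) / (μ(V) μ(W))` (equal to `0` when `μ(V) μ(W) = 0`,
by the Lean convention `x / 0 = 0`). -/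
noncomputable def densityRaw (mu : ℕ → ℝ) (V W : Finset ℕ) (E : Finset (ℕ × ℕ)) : ℝ :=
  muEdges mu E / (muSet mu V * muSet mu W)

/-- The quality
`q = δ^{2+τ} μ(V) μ(W) ∏_{p ∈ P} p^{|f(p)-g(p)|} (1 - 1_{f(p)=g(p)≥1}/p)^{-2} (1 - p^{-1-τ/4})^{-3}`. -/
noncomputable def qualityRaw (τ : ℝ) (mu : ℕ → ℝ) (V W : Finset ℕ) (E : Finset (ℕ × ℕ))
    (P : Finset ℕ) (f g : ℕ → ℕ) : ℝ :=
  densityRaw mu V W E ^ (2 + τ) * muSet mu V * muSet mu W *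
    ∏ p ∈ P, ((p : ℝ) ^ (((f p : ℤ) - (g p : ℤ)).natAbs) *
      ((1 - (if f p = g p ∧ 1 ≤ f p then ((p : ℝ))⁻¹ else 0))⁻¹) ^ 2 *
      ((1 - (p : ℝ) ^ (-1 - τ / 4))⁻¹) ^ 3)

/-- The edge density of a GCD graph. -/
noncomputable def density (G : GCDGraph) : ℝ := densityRaw G.mu G.V G.W G.E

/-- The quality of a GCD graph (with parameter `τ`). -/
noncomputable def quality (τ : ℝ) (G : GCDGraph) : ℝ :=
  qualityRaw τ G.mu G.V G.W G.E G.P G.f G.g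

/-- `G'` is a GCD subgraph of `G`. -/
def IsSubgraph (G' G : GCDGraph) : Prop :=
  G'.mu = G.mu ∧ G'.V ⊆ G.V ∧ G'.W ⊆ G.W ∧ G'.E ⊆ G.E ∧ G.P ⊆ G'.P ∧
    (∀ p ∈ G.P, G'.f p = G.f p) ∧ (∀ p ∈ G.P, G'.g p = G.g p)

/-- `G` is `(P,f,g)`-maximal: every GCD subgraph with the same multiplicative data has
quality at most `q(G)`. -/
def IsMaximal (τ : ℝ) (G : GCDGraph) : Prop :=
  ∀ G' : GCDGraph, IsSubgraph G' G → G'.P = G.P → quality τ G' ≤ quality τ G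

/-- `R(G)`: the set of primes `p ∉ P` dividing `gcd(v,w)` for some edge `(v,w)`. -/
def R (G : GCDGraph) : Set ℕ :=
  {p | p.Prime ∧ p ∉ G.P ∧ ∃ e ∈ G.E, p ∣ Nat.gcd e.1 e.2}

/-- `S_{p^k}`: the subset of elements of `S` exactly divisible by `p^k`. -/
def exactPart (S : Finset ℕ) (p k : ℕ) : Finset ℕ :=
  S.filter fun v => p ^ k ∣ v ∧ ¬ p ^ (k + 1) ∣ v

/-- `E_{p^k, p^ℓ} = E ∩ (V_{p^k} × W_{p^ℓ})`. -/
def edgesAt (G : GCDGraph) (p k l : ℕ) : Finset (ℕ × ℕ) :=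
  G.E.filter fun e => e.1 ∈ exactPart G.V p k ∧ e.2 ∈ exactPart G.W p l

/-- The quality of the GCD subgraph `G_{p^k, p^ℓ}`, with vertex sets `V_{p^k}`, `W_{p^ℓ}`,
edges `E_{p^k,p^ℓ}`, prime set `P ∪ {p}` and `f, g` extended by `f(p) = k`, `g(p) = ℓ`. -/
noncomputable def qualityAt (τ : ℝ) (G : GCDGraph) (p k l : ℕ) : ℝ :=
  qualityRaw τ G.mu (exactPart G.V p k) (exactPart G.W p l) (edgesAt G p k l)
    (insert p G.P) (Function.update G.f p k) (Function.update G.g p l)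

noncomputable def C1 (τ : ℝ) : ℝ := 10 ^ 4 / τ
noncomputable def C2 (τ M : ℝ) : ℝ := 10 * M * C1 τ ^ 3
noncomputable def C3 (τ : ℝ) : ℝ := 10 ^ 3 * C1 τ ^ 3
noncomputable def C4 (τ M : ℝ) : ℝ := 10 ^ 10 * M ^ 2 * C2 τ M ^ 2
noncomputable def C5 (τ M : ℝ) : ℝ := max (C3 τ) ((50 * Real.log (C4 τ M)) ^ 3)
noncomputable def C6 (τ M : ℝ) : ℝ :=
  max (C4 τ M) (max (10 ^ 4 * M * C2 τ M) (C2 τ M ^ (10 / τ)))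
noncomputable def C7 (τ M : ℝ) : ℝ := C5 τ M ^ C6 τ M

/-- `R♯(G)`: those `p ∈ R(G)` admitting `k ≥ 0` with `μ(V_{p^k})/μ(V) ≥ 1 − C₂/p` and
`μ(W_{p^k})/μ(W) ≥ 1 − C₂/p`, and such that `q(G_{p^a,p^b}) < M q(G)` for all `a ≠ b`. -/
def Rsharp (τ M : ℝ) (G : GCDGraph) : Set ℕ :=
  {p ∈ R G |
    (∃ k : ℕ, 1 - C2 τ M / (p : ℝ) ≤ muSet G.mu (exactPart G.V p k) / muSet G.mu G.V ∧
        1 - C2 τ M / (p : ℝ) ≤ muSet G.mu (exactPart G.W p k) / muSet G.mu G.W) ∧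
    ∀ a b : ℕ, a ≠ b → qualityAt τ G p a b < M * quality τ G}

/-- `R♭(G) = R(G) \ R♯(G)`. -/
def Rflat (τ M : ℝ) (G : GCDGraph) : Set ℕ := R G \ Rsharp τ M G

/-- The neighbourhood `Γ_G(v) = {w ∈ W : (v,w) ∈ E}` of a left vertex. -/
def nbhdOfV (G : GCDGraph) (v : ℕ) : Finset ℕ := G.W.filter fun w => (v, w) ∈ G.E

/-- The neighbourhood `Γ_G(w) = {v ∈ V : (v,w) ∈ E}` of a right vertex. -/
def nbhdOfW (G : GCDGraph) (w : ℕ) : Finset ℕ := G.V.filter fun v => (v, w) ∈ G.E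

end GCDGraph

open GCDGraph

/-- `L_t(v,w) = ∑_{p | vw/gcd(v,w)², p > t} 1/p`. -/
noncomputable def Lfun (t : ℝ) (q r : ℕ) : ℝ :=
  ∑ p ∈ (q * r / Nat.gcd q r ^ 2).primeFactors.filter (fun p : ℕ => t < (p : ℝ)), (1 : ℝ) / p

open scoped Classical in
/-- `∑_{p | vw/gcd(v,w)², p > t, p ∉ S} 1/p`. -/
noncomputable def LfunRes (t : ℝ) (S : Set ℕ) (q r : ℕ) : ℝ :=
  ∑ p ∈ (q * r / Nat.gcd q r ^ 2).primeFactors.filter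
      (fun p : ℕ => t < (p : ℝ) ∧ p ∉ S), (1 : ℝ) / p

section Basic

variable {mu : ℕ → ℝ}

lemma muSet_nonneg (hmu : ∀ n, 0 ≤ mu n) (S : Finset ℕ) : 0 ≤ muSet mu S :=
  Finset.sum_nonneg fun n _ => hmu n

lemma muEdges_nonneg (hmu : ∀ n, 0 ≤ mu n) (E : Finset (ℕ × ℕ)) : 0 ≤ muEdges mu E :=
  Finset.sum_nonneg fun e _ => mul_nonneg (hmu e.1) (hmu e.2)

lemma muSet_mono (hmu : ∀ n, 0 ≤ mu n) {S T : Finset ℕ} (h : S ⊆ T) :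
    muSet mu S ≤ muSet mu T :=
  Finset.sum_le_sum_of_subset_of_nonneg h fun n _ _ => hmu n

lemma muEdges_mono (hmu : ∀ n, 0 ≤ mu n) {E F : Finset (ℕ × ℕ)} (h : E ⊆ F) :
    muEdges mu E ≤ muEdges mu F :=
  Finset.sum_le_sum_of_subset_of_nonneg h fun e _ _ => mul_nonneg (hmu e.1) (hmu e.2)

lemma muEdges_le_mul (hmu : ∀ n, 0 ≤ mu n) {E : Finset (ℕ × ℕ)} {A B : Finset ℕ}
    (h : E ⊆ A ×ˢ B) : muEdges mu E ≤ muSet mu A * muSet mu B := by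
  calc muEdges mu E ≤ muEdges mu (A ×ˢ B) := muEdges_mono hmu h
    _ = muSet mu A * muSet mu B := by
        rw [muEdges, muSet, muSet, Finset.sum_product, ← Finset.sum_mul_sum]

lemma exactPart_disjoint {S : Finset ℕ} {p : ℕ} (hp : 2 ≤ p) {a b : ℕ} (hab : a ≠ b) :
    Disjoint (exactPart S p a) (exactPart S p b) := by
  rw [Finset.disjoint_left]
  rintro v hva hvb
  simp only [exactPart, Finset.mem_filter] at hva hvb
  rcases lt_or_gt_of_ne hab with h | h
  · exact hva.2.2 (dvd_trans (pow_dvd_pow p h) hvb.2.1)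
  · exact hvb.2.2 (dvd_trans (pow_dvd_pow p h) hva.2.1)

/-- The total measure of exact parts other than `k`, together with part `k`, is at most
the measure of `S`. -/
lemma sum_exactPart_le (hmu : ∀ n, 0 ≤ mu n) (S : Finset ℕ) {p : ℕ} (hp : 2 ≤ p)
    (T : Finset ℕ) (k : ℕ) :
    muSet mu (exactPart S p k) + ∑ a ∈ T.filter (fun a => a ≠ k), muSet mu (exactPart S p a)
      ≤ muSet mu S := by
  classical
  set U : Finset ℕ := insert k (T.filter (fun a => a ≠ k)) with hU
  have hdisj : (U : Set ℕ).PairwiseDisjoint (fun a => exactPart S p a) := by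
    intro a _ b _ hab
    exact exactPart_disjoint hp hab
  have hk : k ∉ T.filter (fun a => a ≠ k) := by
    simp only [Finset.mem_filter]; tauto
  calc muSet mu (exactPart S p k)
        + ∑ a ∈ T.filter (fun a => a ≠ k), muSet mu (exactPart S p a)
      = ∑ a ∈ U, muSet mu (exactPart S p a) := by
        rw [hU, Finset.sum_insert hk]
    _ = muSet mu (U.biUnion (fun a => exactPart S p a)) := (Finset.sum_biUnion hdisj).symm
    _ ≤ muSet mu S := by
        refine muSet_mono hmu ?_
        intro v hv
        simp only [Finset.mem_biUnion] at hv
        obtain ⟨a, _, hva⟩ := hv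
        exact Finset.mem_filter.1 hva |>.1

/-- p divides vw/gcd(v,w)^2 iff the p-adic valuations of v and w differ. -/
lemma dvd_quot_iff {p v w : ℕ} (hp : p.Prime) (hv : 0 < v) (hw : 0 < w) :
    p ∣ v * w / Nat.gcd v w ^ 2 ↔ v.factorization p ≠ w.factorization p := by
  have hv' : v ≠ 0 := hv.ne'
  have hw' : w ≠ 0 := hw.ne'
  have hg : Nat.gcd v w ≠ 0 := Nat.gcd_ne_zero_left hv'
  have hdvd : Nat.gcd v w ^ 2 ∣ v * w := by
    rw [sq]; exact mul_dvd_mul (Nat.gcd_dvd_left v w) (Nat.gcd_dvd_right v w)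
  have hN : v * w / Nat.gcd v w ^ 2 ≠ 0 := by
    rw [Nat.div_ne_zero_iff_of_dvd hdvd]
    exact ⟨Nat.mul_ne_zero hv' hw', pow_ne_zero 2 hg⟩
  rw [hp.dvd_iff_one_le_factorization hN, Nat.factorization_div hdvd,
    Finsupp.tsub_apply, Nat.factorization_mul hv' hw', Nat.factorization_pow,
    Nat.factorization_gcd hv' hw', Finsupp.add_apply, Finsupp.smul_apply,
    Finsupp.inf_apply]
  simp only [smul_eq_mul]
  omega

end Basic
lemma geom_range_le {u : ℝ} (h0 : 0 ≤ u) (h1 : u ≤ 1/2) (n : ℕ) :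
    ∑ i ∈ Finset.range n, u ^ i ≤ 2 := by
  have h1' : u < 1 := lt_of_le_of_lt h1 (by norm_num)
  have := Summable.sum_le_tsum (Finset.range n) (fun i _ => pow_nonneg h0 i)
    (summable_geometric_of_lt_one h0 h1')
  rw [tsum_geometric_of_lt_one h0 h1'] at this
  refine this.trans ?_
  rw [inv_le_comm₀ (by linarith) (by norm_num)]
  linarith

lemma geom_icc_le {u : ℝ} (h0 : 0 ≤ u) (h1 : u ≤ 1/2) (N : ℕ) :
    ∑ j ∈ Finset.Icc 1 N, u ^ j ≤ 2 * u := by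
  rw [← Finset.Ico_add_one_right_eq_Icc, Finset.sum_Ico_eq_sum_range]
  have : ∀ i ∈ Finset.range (N + 1 - 1), u ^ (1 + i) = u * u ^ i := by
    intro i _; rw [pow_add, pow_one]
  rw [Finset.sum_congr rfl this, ← Finset.mul_sum, mul_comm (2:ℝ) u]
  exact mul_le_mul_of_nonneg_left (geom_range_le h0 h1 _) h0

lemma geom_dist_le {u : ℝ} (h0 : 0 ≤ u) (h1 : u ≤ 1/2) (T : Finset ℕ) (k : ℕ) :
    ∑ a ∈ T.filter (fun a => a ≠ k), u ^ ((a:ℤ) - (k:ℤ)).natAbs ≤ 4 * u := by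
  have hnn : ∀ a : ℕ, 0 ≤ u ^ ((a:ℤ) - (k:ℤ)).natAbs := fun a => pow_nonneg h0 _
  have hsub : T.filter (fun a => a ≠ k) ⊆ T.filter (fun a => a < k) ∪ T.filter (fun a => k < a) := by
    intro a ha
    simp only [Finset.mem_filter, Finset.mem_union] at ha ⊢
    rcases lt_or_gt_of_ne ha.2 with h | h
    exacts [Or.inl ⟨ha.1, h⟩, Or.inr ⟨ha.1, h⟩]
  have hdisj : Disjoint (T.filter (fun a => a < k)) (T.filter (fun a => k < a)) := by
    rw [Finset.disjoint_left]; intro a ha hb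
    simp only [Finset.mem_filter] at ha hb; omega
  have hlt : ∑ a ∈ T.filter (fun a => a < k), u ^ ((a:ℤ) - (k:ℤ)).natAbs ≤ 2 * u := by
    have h1' : ∀ a ∈ T.filter (fun a => a < k),
        u ^ ((a:ℤ) - (k:ℤ)).natAbs = u ^ (k - a) := by
      intro a ha; simp only [Finset.mem_filter] at ha
      have : ((a:ℤ) - (k:ℤ)).natAbs = k - a := by omega
      rw [this]
    have hinj : ∀ x ∈ T.filter (fun a => a < k), ∀ y ∈ T.filter (fun a => a < k),
        k - x = k - y → x = y := by
      intro x hx y hy h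
      simp only [Finset.mem_filter] at hx hy; omega
    calc ∑ a ∈ T.filter (fun a => a < k), u ^ ((a:ℤ) - (k:ℤ)).natAbs
        = ∑ a ∈ T.filter (fun a => a < k), u ^ (k - a) := Finset.sum_congr rfl h1'
      _ = ∑ j ∈ (T.filter (fun a => a < k)).image (fun a => k - a), u ^ j :=
          (Finset.sum_image hinj).symm
      _ ≤ ∑ j ∈ Finset.Icc 1 k, u ^ j := by
          refine Finset.sum_le_sum_of_subset_of_nonneg ?_ (fun j _ _ => pow_nonneg h0 j)
          intro j hj
          simp only [Finset.mem_image, Finset.mem_filter] at hj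
          obtain ⟨a, ⟨_, hak⟩, rfl⟩ := hj
          simp only [Finset.mem_Icc]; omega
      _ ≤ 2 * u := geom_icc_le h0 h1 k
  have hgt : ∑ a ∈ T.filter (fun a => k < a), u ^ ((a:ℤ) - (k:ℤ)).natAbs ≤ 2 * u := by
    have h1' : ∀ a ∈ T.filter (fun a => k < a),
        u ^ ((a:ℤ) - (k:ℤ)).natAbs = u ^ (a - k) := by
      intro a ha; simp only [Finset.mem_filter] at ha
      have : ((a:ℤ) - (k:ℤ)).natAbs = a - k := by omega
      rw [this]
    have hinj : ∀ x ∈ T.filter (fun a => k < a), ∀ y ∈ T.filter (fun a => k < a),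
        x - k = y - k → x = y := by
      intro x hx y hy h
      simp only [Finset.mem_filter] at hx hy; omega
    calc ∑ a ∈ T.filter (fun a => k < a), u ^ ((a:ℤ) - (k:ℤ)).natAbs
        = ∑ a ∈ T.filter (fun a => k < a), u ^ (a - k) := Finset.sum_congr rfl h1'
      _ = ∑ j ∈ (T.filter (fun a => k < a)).image (fun a => a - k), u ^ j :=
          (Finset.sum_image hinj).symm
      _ ≤ ∑ j ∈ Finset.Icc 1 (T.sup id), u ^ j := by
          refine Finset.sum_le_sum_of_subset_of_nonneg ?_ (fun j _ _ => pow_nonneg h0 j)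
          intro j hj
          simp only [Finset.mem_image, Finset.mem_filter] at hj
          obtain ⟨a, ⟨haT, hak⟩, rfl⟩ := hj
          simp only [Finset.mem_Icc]
          exact ⟨by omega, by have := Finset.le_sup (f := id) haT; simp at this; omega⟩
      _ ≤ 2 * u := geom_icc_le h0 h1 _
  calc ∑ a ∈ T.filter (fun a => a ≠ k), u ^ ((a:ℤ) - (k:ℤ)).natAbs
      ≤ ∑ a ∈ T.filter (fun a => a < k) ∪ T.filter (fun a => k < a),
          u ^ ((a:ℤ) - (k:ℤ)).natAbs :=
        Finset.sum_le_sum_of_subset_of_nonneg hsub (fun a _ _ => hnn a)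
    _ = _ + _ := Finset.sum_union hdisj
    _ ≤ 2 * u + 2 * u := add_le_add hlt hgt
    _ = 4 * u := by ring
lemma telescope_le {m : ℕ} (hm : 2 ≤ m) (N : ℕ) :
    ∑ n ∈ Finset.Icc m N, (1/((n:ℝ)-1) - 1/(n:ℝ)) ≤ 1/((m:ℝ)-1) := by
  have hmpos : (0:ℝ) < (m:ℝ) - 1 := by
    have : (2:ℝ) ≤ (m:ℝ) := by exact_mod_cast hm
    linarith
  rcases lt_or_ge N m with hNm | hNm
  · rw [Finset.Icc_eq_empty (by omega)]
    simp only [Finset.sum_empty]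
    positivity
  · have key : ∀ N', m ≤ N' → ∑ n ∈ Finset.Icc m N', (1/((n:ℝ)-1) - 1/(n:ℝ))
        = 1/((m:ℝ)-1) - 1/(N':ℝ) := by
      intro N' hN'
      induction N', hN' using Nat.le_induction with
      | base => rw [Finset.Icc_self, Finset.sum_singleton]
      | succ N' hN' ih =>
        rw [Finset.sum_Icc_succ_top (by omega), ih]
        push_cast
        ring
    rw [key N hNm]
    have : (0:ℝ) < (N:ℝ) := by
      have : (2:ℝ) ≤ (N:ℝ) := by exact_mod_cast le_trans hm hNm
      linarith
    have : (0:ℝ) ≤ 1/(N:ℝ) := by positivity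
    linarith

lemma sum_inv_sq_le {t : ℝ} (ht : 2 ≤ t) (Q : Finset ℕ) (hQ : ∀ p ∈ Q, t < (p:ℝ)) :
    ∑ p ∈ Q, 1/((p:ℝ))^2 ≤ 2/t := by
  set m : ℕ := Nat.floor t + 1 with hm
  have htpos : (0:ℝ) < t := by linarith
  have hfl : (2:ℕ) ≤ Nat.floor t := Nat.le_floor (by exact_mod_cast ht)
  have hm2 : 2 ≤ m := by omega
  have hmem : ∀ p ∈ Q, p ∈ Finset.Icc m (Q.sup id) := by
    intro p hp
    have h1 : t < (p:ℝ) := hQ p hp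
    have h2 : Nat.floor t < p := by
      rw [Nat.floor_lt htpos.le]; exact h1
    have h3 : p ≤ Q.sup id := by
      have := Finset.le_sup (f := id) hp; simpa using this
    simp only [Finset.mem_Icc]; omega
  have hterm : ∀ p ∈ Q, 1/((p:ℝ))^2 ≤ 1/((p:ℝ)-1) - 1/(p:ℝ) := by
    intro p hp
    have hp2 : 2 ≤ p := by
      have := hmem p hp; simp only [Finset.mem_Icc] at this; omega
    have hpR : (2:ℝ) ≤ (p:ℝ) := by exact_mod_cast hp2
    have h1 : (0:ℝ) < (p:ℝ) - 1 := by linarith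
    have h2 : (0:ℝ) < (p:ℝ) := by linarith
    rw [div_sub_div _ _ (ne_of_gt h1) (ne_of_gt h2)]
    rw [div_le_div_iff₀ (by positivity) (by positivity)]
    ring_nf
    nlinarith
  calc ∑ p ∈ Q, 1/((p:ℝ))^2 ≤ ∑ p ∈ Q, (1/((p:ℝ)-1) - 1/(p:ℝ)) :=
        Finset.sum_le_sum hterm
    _ ≤ ∑ n ∈ Finset.Icc m (Q.sup id), (1/((n:ℝ)-1) - 1/(n:ℝ)) := by
        refine Finset.sum_le_sum_of_subset_of_nonneg hmem ?_
        intro n hn _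
        simp only [Finset.mem_Icc] at hn
        have hn2 : (2:ℝ) ≤ (n:ℝ) := by exact_mod_cast le_trans hm2 hn.1
        have h1 : (0:ℝ) < (n:ℝ) - 1 := by linarith
        have h2 : (0:ℝ) < (n:ℝ) := by linarith
        rw [sub_nonneg, div_le_div_iff₀ h2 h1]
        linarith
    _ ≤ 1/((m:ℝ)-1) := telescope_le hm2 _
    _ ≤ 2/t := by
        have h1 : (m:ℝ) - 1 = (Nat.floor t : ℝ) := by
          rw [hm]; push_cast; ring
        rw [h1]
        have h2 : t/2 ≤ (Nat.floor t : ℝ) := by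
          have h3 : t - 1 < (Nat.floor t : ℝ) := by
            have := Nat.lt_floor_add_one t; linarith
          linarith
        have h4 : (0:ℝ) < (Nat.floor t : ℝ) := by
          have : (2:ℝ) ≤ (Nat.floor t:ℝ) := by exact_mod_cast hfl
          linarith
        rw [div_le_div_iff₀ h4 htpos]
        nlinarith

lemma rpow_amgm {x y θ : ℝ} (hx0 : 0 ≤ x) (hy0 : 0 ≤ y) (hx1 : x ≤ 1) (hy1 : y ≤ 1)
    (hθ : 1/2 ≤ θ) : (x*y) ^ θ ≤ (x+y)/2 := by
  rcases eq_or_lt_of_le (mul_nonneg hx0 hy0) with h0 | h0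
  · rw [← h0, Real.zero_rpow (by linarith)]
    positivity
  · calc (x*y) ^ θ ≤ (x*y) ^ ((1:ℝ)/2) :=
        Real.rpow_le_rpow_of_exponent_ge h0 (by nlinarith) hθ
      _ = Real.sqrt (x*y) := (Real.sqrt_eq_rpow _).symm
      _ ≤ (x+y)/2 := by
          rw [show (x+y)/2 = Real.sqrt (((x+y)/2)^2) by rw [Real.sqrt_sq (by positivity)]]
          apply Real.sqrt_le_sqrt; nlinarith [sq_nonneg (x-y)]
section PairSum

variable {θ u c : ℝ} {rng : Finset ℕ} {k : ℕ} {x y : ℕ → ℝ}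

lemma pair_sum_le (hθ1 : 1/2 ≤ θ) (hθ2 : θ ≤ 1) (hu0 : 0 ≤ u) (hu : u ≤ 1/2)
    (hc0 : 0 ≤ c) (hc1 : c ≤ 1)
    (hx0 : ∀ a, 0 ≤ x a) (hy0 : ∀ a, 0 ≤ y a)
    (hx1 : ∀ a, x a ≤ 1) (hy1 : ∀ a, y a ≤ 1)
    (hxs : ∑ a ∈ rng.filter (fun a => a ≠ k), x a ≤ c)
    (hys : ∑ b ∈ rng.filter (fun b => b ≠ k), y b ≤ c) :
    ∑ ab ∈ (rng ×ˢ rng).filter (fun ab => ab.1 ≠ ab.2),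
      (x ab.1 * y ab.2) ^ θ * u ^ ((ab.1:ℤ) - (ab.2:ℤ)).natAbs ≤ 12 * (c ^ θ * u) := by
  classical
  set f : ℕ × ℕ → ℝ := fun ab => (x ab.1 * y ab.2) ^ θ * u ^ ((ab.1:ℤ) - (ab.2:ℤ)).natAbs
    with hf
  have hθ0 : (0:ℝ) ≤ θ := by linarith
  have hf0 : ∀ ab, 0 ≤ f ab :=
    fun ab => mul_nonneg (Real.rpow_nonneg (mul_nonneg (hx0 _) (hy0 _)) _) (pow_nonneg hu0 _)
  have hxc : ∀ a ∈ rng, a ≠ k → x a ≤ c := by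
    intro a ha hak
    refine le_trans ?_ hxs
    exact Finset.single_le_sum (fun i _ => hx0 i) (Finset.mem_filter.2 ⟨ha, hak⟩)
  have hyc : ∀ b ∈ rng, b ≠ k → y b ≤ c := by
    intro b hb hbk
    refine le_trans ?_ hys
    exact Finset.single_le_sum (fun i _ => hy0 i) (Finset.mem_filter.2 ⟨hb, hbk⟩)
  set S : Finset (ℕ × ℕ) := (rng ×ˢ rng).filter (fun ab => ab.1 ≠ ab.2) with hS
  -- split
  have hsplit : ∑ ab ∈ S, f ab
      = (∑ ab ∈ S.filter (fun ab => ab.2 = k), f ab)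
        + ((∑ ab ∈ (S.filter (fun ab => ¬ ab.2 = k)).filter (fun ab => ab.1 = k), f ab)
          + ∑ ab ∈ (S.filter (fun ab => ¬ ab.2 = k)).filter (fun ab => ¬ ab.1 = k), f ab) := by
    rw [Finset.sum_filter_add_sum_filter_not (S.filter (fun ab => ¬ ab.2 = k))
      (fun ab => ab.1 = k) f]
    rw [Finset.sum_filter_add_sum_filter_not S (fun ab => ab.2 = k) f]
  -- part 1 : b = k
  have hT1 : ∑ ab ∈ S.filter (fun ab => ab.2 = k), f ab ≤ c ^ θ * (4 * u) := by
    have hsub : S.filter (fun ab => ab.2 = k)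
        ⊆ (rng.filter (fun a => a ≠ k)).image (fun a => (a, k)) := by
      intro ab hab
      simp only [hS, Finset.mem_filter, Finset.mem_product, Finset.mem_image] at hab ⊢
      obtain ⟨⟨⟨h1, h2⟩, h3⟩, h4⟩ := hab
      refine ⟨ab.1, ⟨h1, fun hk => h3 (by rw [hk, h4])⟩, ?_⟩
      rw [← h4]
    calc ∑ ab ∈ S.filter (fun ab => ab.2 = k), f ab
        ≤ ∑ ab ∈ (rng.filter (fun a => a ≠ k)).image (fun a => (a, k)), f ab :=
          Finset.sum_le_sum_of_subset_of_nonneg hsub (fun ab _ _ => hf0 ab)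
      _ = ∑ a ∈ rng.filter (fun a => a ≠ k), f (a, k) :=
          Finset.sum_image (fun a _ b _ h => congrArg Prod.fst h)
      _ ≤ ∑ a ∈ rng.filter (fun a => a ≠ k), c ^ θ * u ^ ((a:ℤ) - (k:ℤ)).natAbs := by
          refine Finset.sum_le_sum ?_
          intro a ha
          simp only [Finset.mem_filter] at ha
          refine mul_le_mul_of_nonneg_right ?_ (pow_nonneg hu0 _)
          refine Real.rpow_le_rpow (mul_nonneg (hx0 _) (hy0 _)) ?_ hθ0
          calc x a * y k ≤ c * 1 :=
              mul_le_mul (hxc a ha.1 ha.2) (hy1 k) (hy0 k) hc0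
            _ = c := mul_one c
      _ = c ^ θ * ∑ a ∈ rng.filter (fun a => a ≠ k), u ^ ((a:ℤ) - (k:ℤ)).natAbs := by
          rw [Finset.mul_sum]
      _ ≤ c ^ θ * (4 * u) := by
          refine mul_le_mul_of_nonneg_left (geom_dist_le hu0 hu rng k) (Real.rpow_nonneg hc0 _)
  -- part 2 : a = k, b ≠ k
  have hT2 : ∑ ab ∈ (S.filter (fun ab => ¬ ab.2 = k)).filter (fun ab => ab.1 = k), f ab
      ≤ c ^ θ * (4 * u) := by
    have hsub : (S.filter (fun ab => ¬ ab.2 = k)).filter (fun ab => ab.1 = k)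
        ⊆ (rng.filter (fun b => b ≠ k)).image (fun b => (k, b)) := by
      intro ab hab
      simp only [hS, Finset.mem_filter, Finset.mem_product, Finset.mem_image] at hab ⊢
      obtain ⟨⟨⟨⟨h1, h2⟩, h3⟩, h4⟩, h5⟩ := hab
      exact ⟨ab.2, ⟨h2, h4⟩, by rw [← h5]⟩
    calc ∑ ab ∈ (S.filter (fun ab => ¬ ab.2 = k)).filter (fun ab => ab.1 = k), f ab
        ≤ ∑ ab ∈ (rng.filter (fun b => b ≠ k)).image (fun b => (k, b)), f ab :=
          Finset.sum_le_sum_of_subset_of_nonneg hsub (fun ab _ _ => hf0 ab)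
      _ = ∑ b ∈ rng.filter (fun b => b ≠ k), f (k, b) :=
          Finset.sum_image (fun a _ b _ h => congrArg Prod.snd h)
      _ ≤ ∑ b ∈ rng.filter (fun b => b ≠ k), c ^ θ * u ^ ((b:ℤ) - (k:ℤ)).natAbs := by
          refine Finset.sum_le_sum ?_
          intro b hb
          simp only [Finset.mem_filter] at hb
          have hd : ((k:ℤ) - (b:ℤ)).natAbs = ((b:ℤ) - (k:ℤ)).natAbs := by omega
          simp only [hf, hd]
          refine mul_le_mul_of_nonneg_right ?_ (pow_nonneg hu0 _)
          refine Real.rpow_le_rpow (mul_nonneg (hx0 _) (hy0 _)) ?_ hθ0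
          calc x k * y b ≤ 1 * c :=
              mul_le_mul (hx1 k) (hyc b hb.1 hb.2) (hy0 b) zero_le_one
            _ = c := one_mul c
      _ = c ^ θ * ∑ b ∈ rng.filter (fun b => b ≠ k), u ^ ((b:ℤ) - (k:ℤ)).natAbs := by
          rw [Finset.mul_sum]
      _ ≤ c ^ θ * (4 * u) := by
          refine mul_le_mul_of_nonneg_left (geom_dist_le hu0 hu rng k) (Real.rpow_nonneg hc0 _)
  -- part 3 : a ≠ k, b ≠ k
  have hT3 : ∑ ab ∈ (S.filter (fun ab => ¬ ab.2 = k)).filter (fun ab => ¬ ab.1 = k), f ab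
      ≤ 4 * (c * u) := by
    set S3 := (S.filter (fun ab => ¬ ab.2 = k)).filter (fun ab => ¬ ab.1 = k) with hS3
    have hmemS3 : ∀ ab ∈ S3, ab.1 ∈ rng ∧ ab.2 ∈ rng ∧ ab.1 ≠ ab.2 ∧ ab.1 ≠ k ∧ ab.2 ≠ k := by
      intro ab hab
      simp only [hS3, hS, Finset.mem_filter, Finset.mem_product] at hab
      tauto
    set gx : ℕ × ℕ → ℝ := fun ab =>
      x ab.1 * (if ab.2 = ab.1 then 0 else u ^ ((ab.2:ℤ) - (ab.1:ℤ)).natAbs) with hgx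
    set gy : ℕ × ℕ → ℝ := fun ab =>
      y ab.2 * (if ab.1 = ab.2 then 0 else u ^ ((ab.1:ℤ) - (ab.2:ℤ)).natAbs) with hgy
    have hgx0 : ∀ ab, 0 ≤ gx ab := by
      intro ab; refine mul_nonneg (hx0 _) ?_
      split <;> [rfl; exact pow_nonneg hu0 _]
    have hgy0 : ∀ ab, 0 ≤ gy ab := by
      intro ab; refine mul_nonneg (hy0 _) ?_
      split <;> [rfl; exact pow_nonneg hu0 _]
    have hfg : ∀ ab ∈ S3, f ab ≤ (gx ab + gy ab) / 2 := by
      intro ab hab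
      obtain ⟨h1, h2, h3, h4, h5⟩ := hmemS3 ab hab
      have hd : ((ab.2:ℤ) - (ab.1:ℤ)).natAbs = ((ab.1:ℤ) - (ab.2:ℤ)).natAbs := by omega
      have e1 : gx ab = x ab.1 * u ^ ((ab.1:ℤ) - (ab.2:ℤ)).natAbs := by
        simp only [hgx]
        rw [if_neg (show ¬ ab.2 = ab.1 from fun h => h3 h.symm), hd]
      have e2 : gy ab = y ab.2 * u ^ ((ab.1:ℤ) - (ab.2:ℤ)).natAbs := by
        simp only [hgy]
        rw [if_neg h3]
      rw [e1, e2, hf]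
      calc (x ab.1 * y ab.2) ^ θ * u ^ ((ab.1:ℤ) - (ab.2:ℤ)).natAbs
          ≤ (x ab.1 + y ab.2)/2 * u ^ ((ab.1:ℤ) - (ab.2:ℤ)).natAbs := by
            refine mul_le_mul_of_nonneg_right ?_ (pow_nonneg hu0 _)
            exact rpow_amgm (hx0 _) (hy0 _) (hx1 _) (hy1 _) hθ1
        _ = (x ab.1 * u ^ ((ab.1:ℤ) - (ab.2:ℤ)).natAbs
              + y ab.2 * u ^ ((ab.1:ℤ) - (ab.2:ℤ)).natAbs) / 2 := by ring
    have hgxsum : ∑ ab ∈ S3, gx ab ≤ 4 * (c * u) := by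
      have hsub : S3 ⊆ (rng.filter (fun a => a ≠ k)) ×ˢ rng := by
        intro ab hab
        obtain ⟨h1, h2, h3, h4, h5⟩ := hmemS3 ab hab
        simp only [Finset.mem_product, Finset.mem_filter]
        exact ⟨⟨h1, h4⟩, h2⟩
      calc ∑ ab ∈ S3, gx ab ≤ ∑ ab ∈ (rng.filter (fun a => a ≠ k)) ×ˢ rng, gx ab :=
            Finset.sum_le_sum_of_subset_of_nonneg hsub (fun ab _ _ => hgx0 ab)
        _ = ∑ a ∈ rng.filter (fun a => a ≠ k), ∑ b ∈ rng,
              x a * (if b = a then 0 else u ^ ((b:ℤ) - (a:ℤ)).natAbs) := by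
            rw [Finset.sum_product]
        _ = ∑ a ∈ rng.filter (fun a => a ≠ k),
              x a * ∑ b ∈ rng.filter (fun b => b ≠ a), u ^ ((b:ℤ) - (a:ℤ)).natAbs := by
            refine Finset.sum_congr rfl ?_
            intro a _
            rw [← Finset.mul_sum]
            congr 1
            rw [Finset.sum_filter]
            refine Finset.sum_congr rfl ?_
            intro b _
            by_cases h : b = a
            · simp [h]
            · simp [h]
        _ ≤ ∑ a ∈ rng.filter (fun a => a ≠ k), x a * (4 * u) := by
            refine Finset.sum_le_sum ?_
            intro a _
            exact mul_le_mul_of_nonneg_left (geom_dist_le hu0 hu rng a) (hx0 a)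
        _ = (∑ a ∈ rng.filter (fun a => a ≠ k), x a) * (4 * u) := by
            rw [Finset.sum_mul]
        _ ≤ c * (4 * u) := by
            refine mul_le_mul_of_nonneg_right hxs (by positivity)
        _ = 4 * (c * u) := by ring
    have hgysum : ∑ ab ∈ S3, gy ab ≤ 4 * (c * u) := by
      have hsub : S3 ⊆ rng ×ˢ (rng.filter (fun b => b ≠ k)) := by
        intro ab hab
        obtain ⟨h1, h2, h3, h4, h5⟩ := hmemS3 ab hab
        simp only [Finset.mem_product, Finset.mem_filter]
        exact ⟨h1, h2, h5⟩
      calc ∑ ab ∈ S3, gy ab ≤ ∑ ab ∈ rng ×ˢ (rng.filter (fun b => b ≠ k)), gy ab :=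
            Finset.sum_le_sum_of_subset_of_nonneg hsub (fun ab _ _ => hgy0 ab)
        _ = ∑ b ∈ rng.filter (fun b => b ≠ k), ∑ a ∈ rng,
              y b * (if a = b then 0 else u ^ ((a:ℤ) - (b:ℤ)).natAbs) := by
            rw [Finset.sum_product_right]
        _ = ∑ b ∈ rng.filter (fun b => b ≠ k),
              y b * ∑ a ∈ rng.filter (fun a => a ≠ b), u ^ ((a:ℤ) - (b:ℤ)).natAbs := by
            refine Finset.sum_congr rfl ?_
            intro b _
            rw [← Finset.mul_sum]
            congr 1
            rw [Finset.sum_filter]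
            refine Finset.sum_congr rfl ?_
            intro a _
            by_cases h : a = b
            · simp [h]
            · simp [h]
        _ ≤ ∑ b ∈ rng.filter (fun b => b ≠ k), y b * (4 * u) := by
            refine Finset.sum_le_sum ?_
            intro b _
            exact mul_le_mul_of_nonneg_left (geom_dist_le hu0 hu rng b) (hy0 b)
        _ = (∑ b ∈ rng.filter (fun b => b ≠ k), y b) * (4 * u) := by
            rw [Finset.sum_mul]
        _ ≤ c * (4 * u) := mul_le_mul_of_nonneg_right hys (by positivity)
        _ = 4 * (c * u) := by ring
    calc ∑ ab ∈ S3, f ab ≤ ∑ ab ∈ S3, (gx ab + gy ab) / 2 := Finset.sum_le_sum hfg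
      _ = ((∑ ab ∈ S3, gx ab) + ∑ ab ∈ S3, gy ab) / 2 := by
          rw [← Finset.sum_add_distrib, Finset.sum_div]
      _ ≤ (4 * (c * u) + 4 * (c * u)) / 2 := by
          gcongr
      _ = 4 * (c * u) := by ring
  -- combine
  have hccθ : c ≤ c ^ θ := by
    rcases eq_or_lt_of_le hc0 with h | h
    · rw [← h]; exact Real.rpow_nonneg le_rfl θ
    · calc c = c ^ (1:ℝ) := (Real.rpow_one c).symm
        _ ≤ c ^ θ := Real.rpow_le_rpow_of_exponent_ge h hc1 hθ2
  calc ∑ ab ∈ S, f ab ≤ c ^ θ * (4*u) + (c ^ θ * (4*u) + 4 * (c*u)) := by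
        rw [hsplit]; exact add_le_add hT1 (add_le_add hT2 hT3)
    _ ≤ c ^ θ * (4*u) + (c ^ θ * (4*u) + 4 * (c ^ θ * u)) := by
        have := mul_le_mul_of_nonneg_right hccθ hu0
        nlinarith
    _ = 12 * (c ^ θ * u) := by ring

end PairSum
section Core

open GCDGraph

set_option maxHeartbeats 1000000

/-- The local factor at a prime in the quality. -/
noncomputable def Phi (τ : ℝ) (f g : ℕ → ℕ) (q : ℕ) : ℝ :=
  (q : ℝ) ^ (((f q : ℤ) - (g q : ℤ)).natAbs) *
    ((1 - (if f q = g q ∧ 1 ≤ f q then ((q : ℝ))⁻¹ else 0))⁻¹) ^ 2 *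
    ((1 - (q : ℝ) ^ (-1 - τ / 4))⁻¹) ^ 3

lemma qualityRaw_eq (τ : ℝ) (mu : ℕ → ℝ) (V W : Finset ℕ) (E : Finset (ℕ × ℕ))
    (P : Finset ℕ) (f g : ℕ → ℕ) :
    qualityRaw τ mu V W E P f g
      = densityRaw mu V W E ^ (2 + τ) * muSet mu V * muSet mu W * ∏ q ∈ P, Phi τ f g q := rfl

lemma Phi_pos {τ : ℝ} (hτ : 0 < τ) {f g : ℕ → ℕ} {q : ℕ} (hq : q.Prime) :
    0 < Phi τ f g q := by
  have hq1 : (1:ℝ) < (q:ℝ) := by exact_mod_cast hq.one_lt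
  have h1 : (0:ℝ) < (q:ℝ) ^ (((f q : ℤ) - (g q : ℤ)).natAbs) := by positivity
  have h2 : (0:ℝ) < (1 - (if f q = g q ∧ 1 ≤ f q then ((q : ℝ))⁻¹ else 0))⁻¹ := by
    rw [inv_pos]
    split
    · rw [sub_pos, inv_lt_one_iff₀]; right; exact hq1
    · norm_num
  have h3 : (0:ℝ) < (1 - (q:ℝ) ^ (-1 - τ / 4))⁻¹ := by
    rw [inv_pos, sub_pos]
    exact Real.rpow_lt_one_of_one_lt_of_neg hq1 (by linarith)
  exact mul_pos (mul_pos h1 (pow_pos h2 2)) (pow_pos h3 3)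

lemma one_le_beta_cube {τ : ℝ} (hτ : 0 < τ) {q : ℕ} (hq : q.Prime) :
    1 ≤ ((1 - (q:ℝ) ^ (-1 - τ / 4))⁻¹) ^ 3 := by
  have hq1 : (1:ℝ) < (q:ℝ) := by exact_mod_cast hq.one_lt
  have h1 : (0:ℝ) < (q:ℝ) ^ (-1 - τ / 4) := Real.rpow_pos_of_pos (by linarith) _
  have h2 : (q:ℝ) ^ (-1 - τ / 4) < 1 :=
    Real.rpow_lt_one_of_one_lt_of_neg hq1 (by linarith)
  have h3 : 1 ≤ (1 - (q:ℝ) ^ (-1 - τ / 4))⁻¹ := by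
    rw [le_inv_comm₀ (by norm_num) (by linarith)]
    linarith
  calc (1:ℝ) = 1 ^ 3 := by norm_num
    _ ≤ _ := pow_le_pow_left₀ (by norm_num) h3 3

lemma C2_pos {τ M : ℝ} (hτ0 : 0 < τ) (hM : 2 ≤ M) : 0 < C2 τ M := by
  rw [C2, C1]
  have : (0:ℝ) < 10^4/τ := by positivity
  positivity

lemma C2_one_le {τ M : ℝ} (hτ0 : 0 < τ) (hτ1 : τ < 1/100) (hM : 2 ≤ M) : 1 ≤ C2 τ M := by
  rw [C2, C1]
  have h1 : (1:ℝ) ≤ (10:ℝ)^4/τ := by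
    rw [le_div_iff₀ hτ0]; nlinarith
  nlinarith [pow_le_pow_left₀ (by norm_num : (0:ℝ) ≤ 1) h1 3]

/-- Core estimate: the measure of the edges on which `p` divides `vw/gcd(v,w)²` is small. -/
lemma edge_part_bound (τ M : ℝ) (hτ : τ ∈ Set.Ioo (0 : ℝ) (1 / 100)) (hM : 2 ≤ M)
    (G : GCDGraph) (p : ℕ) (hp : p.Prime) (hpP : p ∉ G.P)
    (hμV : 0 < muSet G.mu G.V) (hμW : 0 < muSet G.mu G.W)
    (hpbig : (8:ℝ) ≤ (p:ℝ)) (hC2p : C2 τ M ≤ (p:ℝ))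
    (k : ℕ)
    (hkV : 1 - C2 τ M / (p:ℝ) ≤ muSet G.mu (exactPart G.V p k) / muSet G.mu G.V)
    (hkW : 1 - C2 τ M / (p:ℝ) ≤ muSet G.mu (exactPart G.W p k) / muSet G.mu G.W)
    (hq : ∀ a b : ℕ, a ≠ b → qualityAt τ G p a b < M * quality τ G) :
    muEdges G.mu (G.E.filter (fun e => p ∣ e.1 * e.2 / Nat.gcd e.1 e.2 ^ 2))
      ≤ 12 * M * C2 τ M / (p:ℝ) * muEdges G.mu G.E := by
  classical
  obtain ⟨hτ0, hτ1⟩ := hτ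
  have hmu := G.mu_nonneg
  have hp2 : 2 ≤ p := hp.two_le
  have hpR : (0:ℝ) < (p:ℝ) := by positivity
  have hC2pos : 0 < C2 τ M := C2_pos hτ0 hM
  have hC2one : 1 ≤ C2 τ M := C2_one_le hτ0 hτ1 hM
  have h2τ : (0:ℝ) < 2 + τ := by linarith
  have hME0 : 0 ≤ muEdges G.mu G.E := muEdges_nonneg hmu _
  -- parameters
  set κ : ℝ := 1 / (2 + τ) with hκ
  set θ : ℝ := (1 + τ) / (2 + τ) with hθ
  set u : ℝ := (p:ℝ) ^ (-κ) with hu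
  set c : ℝ := C2 τ M / (p:ℝ) with hc
  have hκ0 : 0 < κ := by rw [hκ]; positivity
  have hκ1 : κ ≤ 1 := by rw [hκ, div_le_one h2τ]; linarith
  have hθκ : (1 + τ) * κ = θ := by rw [hκ, hθ]; field_simp
  have hκτ : (2 + τ) * κ = 1 := by rw [hκ]; field_simp
  have hθκ1 : θ + κ = 1 := by rw [hκ, hθ]; field_simp; ring
  have hθhalf : 1/2 ≤ θ := by
    rw [hθ, le_div_iff₀ h2τ]; linarith
  have hθ1 : θ ≤ 1 := by
    rw [hθ, div_le_one h2τ]; linarith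
  have hθ0 : 0 ≤ θ := by linarith
  have hu0 : 0 ≤ u := Real.rpow_nonneg hpR.le _
  have hupos : 0 < u := Real.rpow_pos_of_pos hpR _
  have huhalf : u ≤ 1/2 := by
    have h8 : (2:ℝ) ^ (2+τ) ≤ (p:ℝ) := by
      calc (2:ℝ) ^ (2+τ) ≤ (2:ℝ) ^ (3:ℝ) :=
            Real.rpow_le_rpow_of_exponent_le (by norm_num) (by linarith)
        _ = 8 := by
            rw [show (3:ℝ) = ((3:ℕ):ℝ) by norm_num, Real.rpow_natCast]; norm_num
        _ ≤ (p:ℝ) := hpbig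
    have h2p : (2:ℝ) ≤ (p:ℝ) ^ κ := by
      calc (2:ℝ) = ((2:ℝ) ^ (2+τ)) ^ κ := by
            rw [← Real.rpow_mul (by norm_num), hκτ, Real.rpow_one]
        _ ≤ (p:ℝ) ^ κ := Real.rpow_le_rpow (by positivity) h8 hκ0.le
    rw [hu, Real.rpow_neg hpR.le]
    rw [show (1:ℝ)/2 = 2⁻¹ by norm_num]
    exact inv_anti₀ (by norm_num) h2p
  have hc0 : 0 ≤ c := by rw [hc]; positivity
  have hc1 : c ≤ 1 := by rw [hc, div_le_one hpR]; exact hC2p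
  -- normalized part measures
  set x : ℕ → ℝ := fun a => muSet G.mu (exactPart G.V p a) / muSet G.mu G.V with hx
  set y : ℕ → ℝ := fun b => muSet G.mu (exactPart G.W p b) / muSet G.mu G.W with hy
  have hx0 : ∀ a, 0 ≤ x a := fun a => div_nonneg (muSet_nonneg hmu _) hμV.le
  have hy0 : ∀ b, 0 ≤ y b := fun b => div_nonneg (muSet_nonneg hmu _) hμW.le
  have hx1 : ∀ a, x a ≤ 1 := by
    intro a; rw [hx]
    exact div_le_one_of_le₀ (muSet_mono hmu (Finset.filter_subset _ _)) hμV.le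
  have hy1 : ∀ b, y b ≤ 1 := by
    intro b; rw [hy]
    exact div_le_one_of_le₀ (muSet_mono hmu (Finset.filter_subset _ _)) hμW.le
  set rng : Finset ℕ := Finset.range (G.V.sup id + G.W.sup id + 1) with hrng
  have hxs : ∑ a ∈ rng.filter (fun a => a ≠ k), x a ≤ c := by
    have h1 := sum_exactPart_le hmu G.V hp2 rng k
    have h2 : (1 - c) * muSet G.mu G.V ≤ muSet G.mu (exactPart G.V p k) :=
      (le_div_iff₀ hμV).mp hkV
    have h3 : ∑ a ∈ rng.filter (fun a => a ≠ k), muSet G.mu (exactPart G.V p a)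
        ≤ c * muSet G.mu G.V := by nlinarith
    simp only [hx]
    rw [← Finset.sum_div, div_le_iff₀ hμV]
    linarith
  have hys : ∑ b ∈ rng.filter (fun b => b ≠ k), y b ≤ c := by
    have h1 := sum_exactPart_le hmu G.W hp2 rng k
    have h2 : (1 - c) * muSet G.mu G.W ≤ muSet G.mu (exactPart G.W p k) :=
      (le_div_iff₀ hμW).mp hkW
    have h3 : ∑ b ∈ rng.filter (fun b => b ≠ k), muSet G.mu (exactPart G.W p b)
        ≤ c * muSet G.mu G.W := by nlinarith
    simp only [hy]
    rw [← Finset.sum_div, div_le_iff₀ hμW]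
    linarith
  -- the product over P
  set Pi : ℝ := ∏ q ∈ G.P, Phi τ G.f G.g q with hPi
  have hPipos : 0 < Pi := Finset.prod_pos (fun q hq => Phi_pos hτ0 (G.P_prime q hq))
  set d : ℝ := densityRaw G.mu G.V G.W G.E with hd
  -- pair bound
  have pair : ∀ a b : ℕ, a ≠ b →
      muEdges G.mu (edgesAt G p a b)
        ≤ M ^ κ * muEdges G.mu G.E * ((x a * y b) ^ θ * u ^ ((a:ℤ) - (b:ℤ)).natAbs) := by
    intro a b hab
    set nab : ℕ := ((a:ℤ) - (b:ℤ)).natAbs with hnab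
    set mab : ℝ := muEdges G.mu (edgesAt G p a b) with hmab
    set Va : ℝ := muSet G.mu (exactPart G.V p a) with hVa
    set Wb : ℝ := muSet G.mu (exactPart G.W p b) with hWb
    have hVa0 : 0 ≤ Va := muSet_nonneg hmu _
    have hWb0 : 0 ≤ Wb := muSet_nonneg hmu _
    have hmab0 : 0 ≤ mab := muEdges_nonneg hmu _
    have hsubab : edgesAt G p a b ⊆ (exactPart G.V p a) ×ˢ (exactPart G.W p b) := by
      intro e he
      simp only [edgesAt, Finset.mem_filter, Finset.mem_product] at he ⊢
      exact he.2
    have hmab_le : mab ≤ Va * Wb := muEdges_le_mul hmu hsubab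
    have hRHS0 : 0 ≤ M ^ κ * muEdges G.mu G.E * ((x a * y b) ^ θ * u ^ nab) := by
      have h1 : (0:ℝ) ≤ M ^ κ := Real.rpow_nonneg (by linarith) _
      have h2 : (0:ℝ) ≤ (x a * y b) ^ θ := Real.rpow_nonneg (mul_nonneg (hx0 a) (hy0 b)) _
      exact mul_nonneg (mul_nonneg h1 hME0) (mul_nonneg h2 (pow_nonneg hu0 _))
    set dab : ℝ := densityRaw G.mu (exactPart G.V p a) (exactPart G.W p b) (edgesAt G p a b)
      with hdab
    have hdab0 : (0:ℝ) ≤ dab := div_nonneg hmab0 (mul_nonneg hVa0 hWb0)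
    set β3 : ℝ := ((1 - (p:ℝ) ^ (-1 - τ/4))⁻¹) ^ 3 with hβ3
    have hβ : 1 ≤ β3 := one_le_beta_cube hτ0 hp
    -- quality inequality with Pi cancelled
    have step1 : dab ^ (2 + τ) * Va * Wb * (p:ℝ) ^ nab
        ≤ M * (d ^ (2+τ) * muSet G.mu G.V * muSet G.mu G.W) := by
      have h1 := hq a b hab
      rw [qualityAt, qualityRaw_eq, Finset.prod_insert hpP] at h1
      have hPhip : Phi τ (Function.update G.f p a) (Function.update G.g p b) p
          = (p:ℝ) ^ nab * β3 := by
        rw [Phi, Function.update_self, Function.update_self, if_neg (fun h => hab h.1)]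
        rw [hβ3, hnab]
        norm_num
      have hPhirest : ∏ q ∈ G.P, Phi τ (Function.update G.f p a) (Function.update G.g p b) q
          = Pi := by
        refine Finset.prod_congr rfl ?_
        intro q hqP
        have hqp : q ≠ p := fun h => hpP (h ▸ hqP)
        rw [Phi, Phi, Function.update_of_ne hqp, Function.update_of_ne hqp]
      rw [hPhip, hPhirest] at h1
      rw [quality, qualityRaw_eq] at h1
      -- h1 : dab^(2+τ) * Va * Wb * ((p:ℝ)^nab * β3 * Pi) < M * (d^(2+τ) * μV * μW * Pi)
      have hA0 : (0:ℝ) ≤ dab ^ (2+τ) * Va * Wb * (p:ℝ) ^ nab :=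
        mul_nonneg (mul_nonneg (mul_nonneg (Real.rpow_nonneg hdab0 _) hVa0) hWb0)
          (pow_nonneg hpR.le _)
      have e1 : dab ^ (2+τ) * Va * Wb * ((p:ℝ) ^ nab * β3 * Pi)
          = (dab ^ (2+τ) * Va * Wb * (p:ℝ) ^ nab * Pi) * β3 := by ring
      have e2 : M * (d ^ (2+τ) * muSet G.mu G.V * muSet G.mu G.W * Pi)
          = (M * (d ^ (2+τ) * muSet G.mu G.V * muSet G.mu G.W)) * Pi := by ring
      rw [e1, e2] at h1
      have h2 : dab ^ (2+τ) * Va * Wb * (p:ℝ) ^ nab * Pi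
          ≤ (dab ^ (2+τ) * Va * Wb * (p:ℝ) ^ nab * Pi) * β3 :=
        le_mul_of_one_le_right (mul_nonneg hA0 hPipos.le) hβ
      exact le_of_lt (lt_of_mul_lt_mul_right (lt_of_le_of_lt h2 h1) hPipos.le)
    by_cases hVW0 : Va * Wb = 0
    · have hm0 : mab = 0 := le_antisymm (le_of_le_of_eq hmab_le hVW0) hmab0
      rw [hm0]; exact hRHS0
    · have hT1pos : 0 < Va * Wb :=
        lt_of_le_of_ne (mul_nonneg hVa0 hWb0) (Ne.symm hVW0)
      have hT2pos : 0 < muSet G.mu G.V * muSet G.mu G.W := mul_pos hμV hμW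
      have ht1pos : 0 < (Va * Wb) ^ ((1:ℝ)+τ) := Real.rpow_pos_of_pos hT1pos _
      have ht2pos : 0 < (muSet G.mu G.V * muSet G.mu G.W) ^ ((1:ℝ)+τ) :=
        Real.rpow_pos_of_pos hT2pos _
      have hBpos : (0:ℝ) < (p:ℝ) ^ nab := pow_pos hpR _
      have hdabeq : dab = mab / (Va * Wb) := rfl
      have hdeq : d = muEdges G.mu G.E / (muSet G.mu G.V * muSet G.mu G.W) := rfl
      rw [hdabeq, hdeq, Real.div_rpow hmab0 hT1pos.le, Real.div_rpow hME0 hT2pos.le] at step1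
      have hsplit1 : (Va * Wb) ^ ((2:ℝ)+τ) = (Va * Wb) ^ ((1:ℝ)+τ) * (Va * Wb) := by
        rw [show (2:ℝ)+τ = (1+τ)+1 by ring, Real.rpow_add hT1pos, Real.rpow_one]
      have hsplit2 : (muSet G.mu G.V * muSet G.mu G.W) ^ ((2:ℝ)+τ)
          = (muSet G.mu G.V * muSet G.mu G.W) ^ ((1:ℝ)+τ)
            * (muSet G.mu G.V * muSet G.mu G.W) := by
        rw [show (2:ℝ)+τ = (1+τ)+1 by ring, Real.rpow_add hT2pos, Real.rpow_one]
      rw [hsplit1, hsplit2] at step1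
      have step2 : mab ^ ((2:ℝ)+τ) * (p:ℝ) ^ nab / (Va * Wb) ^ ((1:ℝ)+τ)
          ≤ M * (muEdges G.mu G.E) ^ ((2:ℝ)+τ)
            / (muSet G.mu G.V * muSet G.mu G.W) ^ ((1:ℝ)+τ) := by
        have eL : mab ^ ((2:ℝ)+τ) / ((Va * Wb) ^ ((1:ℝ)+τ) * (Va * Wb)) * Va * Wb
              * (p:ℝ) ^ nab
            = mab ^ ((2:ℝ)+τ) * (p:ℝ) ^ nab / (Va * Wb) ^ ((1:ℝ)+τ) := by
          field_simp
          have hVa : Va ≠ 0 := left_ne_zero_of_mul hVW0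
          have hWb : Wb ≠ 0 := right_ne_zero_of_mul hVW0
          field_simp
          try ring
        have eR : M * ((muEdges G.mu G.E) ^ ((2:ℝ)+τ)
              / ((muSet G.mu G.V * muSet G.mu G.W) ^ ((1:ℝ)+τ)
                * (muSet G.mu G.V * muSet G.mu G.W))
              * muSet G.mu G.V * muSet G.mu G.W)
            = M * (muEdges G.mu G.E) ^ ((2:ℝ)+τ)
              / (muSet G.mu G.V * muSet G.mu G.W) ^ ((1:ℝ)+τ) := by
          field_simp
          try ring
        rw [eL, eR] at step1
        exact step1
      rw [div_le_div_iff₀ ht1pos ht2pos] at step2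
      -- step2 : mab^(2+τ) * p^nab * T2^(1+τ) ≤ M * ME^(2+τ) * T1^(1+τ)
      have hxy : x a * y b = (Va * Wb) / (muSet G.mu G.V * muSet G.mu G.W) := by
        rw [hx, hy]
        rw [div_mul_div_comm]
      have hkey : mab ^ ((2:ℝ)+τ)
          ≤ M * (muEdges G.mu G.E) ^ ((2:ℝ)+τ) * (x a * y b) ^ ((1:ℝ)+τ)
            * (((p:ℝ) ^ nab)⁻¹) := by
        rw [hxy, Real.div_rpow hT1pos.le hT2pos.le]
        rw [show M * (muEdges G.mu G.E) ^ ((2:ℝ)+τ)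
              * ((Va * Wb) ^ ((1:ℝ)+τ) / (muSet G.mu G.V * muSet G.mu G.W) ^ ((1:ℝ)+τ))
              * (((p:ℝ) ^ nab)⁻¹)
            = (M * (muEdges G.mu G.E) ^ ((2:ℝ)+τ) * (Va * Wb) ^ ((1:ℝ)+τ))
              / ((muSet G.mu G.V * muSet G.mu G.W) ^ ((1:ℝ)+τ) * (p:ℝ) ^ nab) by
          field_simp
          try ring]
        rw [le_div_iff₀ (mul_pos ht2pos hBpos)]
        calc mab ^ ((2:ℝ)+τ) * ((muSet G.mu G.V * muSet G.mu G.W) ^ ((1:ℝ)+τ) * (p:ℝ) ^ nab)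
            = mab ^ ((2:ℝ)+τ) * (p:ℝ) ^ nab
              * (muSet G.mu G.V * muSet G.mu G.W) ^ ((1:ℝ)+τ) := by ring
          _ ≤ M * (muEdges G.mu G.E) ^ ((2:ℝ)+τ) * (Va * Wb) ^ ((1:ℝ)+τ) := step2
      -- take κ-th powers
      have hBne : ((p:ℝ) ^ nab) ≠ 0 := ne_of_gt hBpos
      have hRHSkey0 : 0 ≤ M * (muEdges G.mu G.E) ^ ((2:ℝ)+τ) * (x a * y b) ^ ((1:ℝ)+τ)
          * (((p:ℝ) ^ nab)⁻¹) := by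
        have h1 : (0:ℝ) ≤ (muEdges G.mu G.E) ^ ((2:ℝ)+τ) := Real.rpow_nonneg hME0 _
        have h2 : (0:ℝ) ≤ (x a * y b) ^ ((1:ℝ)+τ) :=
          Real.rpow_nonneg (mul_nonneg (hx0 a) (hy0 b)) _
        have h3 : (0:ℝ) ≤ ((p:ℝ) ^ nab)⁻¹ := by positivity
        have hM0 : (0:ℝ) ≤ M := by linarith
        exact mul_nonneg (mul_nonneg (mul_nonneg hM0 h1) h2) h3
      have hmabk : mab ≤ (M * (muEdges G.mu G.E) ^ ((2:ℝ)+τ) * (x a * y b) ^ ((1:ℝ)+τ)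
          * (((p:ℝ) ^ nab)⁻¹)) ^ κ := by
        have h5 : mab = (mab ^ ((2:ℝ)+τ)) ^ κ := by
          rw [← Real.rpow_mul hmab0, hκτ, Real.rpow_one]
        rw [h5]
        exact Real.rpow_le_rpow (Real.rpow_nonneg hmab0 _) hkey hκ0.le
      refine hmabk.trans (le_of_eq ?_)
      -- expand the κ-th power
      have hM0 : (0:ℝ) ≤ M := by linarith
      have h1 : (0:ℝ) ≤ (muEdges G.mu G.E) ^ ((2:ℝ)+τ) := Real.rpow_nonneg hME0 _
      have h2 : (0:ℝ) ≤ (x a * y b) ^ ((1:ℝ)+τ) :=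
        Real.rpow_nonneg (mul_nonneg (hx0 a) (hy0 b)) _
      have h3 : (0:ℝ) ≤ ((p:ℝ) ^ nab)⁻¹ := by positivity
      rw [Real.mul_rpow (mul_nonneg (mul_nonneg hM0 h1) h2) h3,
        Real.mul_rpow (mul_nonneg hM0 h1) h2, Real.mul_rpow hM0 h1]
      have e1 : ((muEdges G.mu G.E) ^ ((2:ℝ)+τ)) ^ κ = muEdges G.mu G.E := by
        rw [← Real.rpow_mul hME0, hκτ, Real.rpow_one]
      have e2 : ((x a * y b) ^ ((1:ℝ)+τ)) ^ κ = (x a * y b) ^ θ := by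
        rw [← Real.rpow_mul (mul_nonneg (hx0 a) (hy0 b)), hθκ]
      have e3 : (((p:ℝ) ^ nab)⁻¹) ^ κ = u ^ nab := by
        rw [← Real.rpow_natCast (p:ℝ) nab, ← Real.rpow_neg hpR.le, ← Real.rpow_mul hpR.le]
        rw [hu, ← Real.rpow_natCast ((p:ℝ) ^ (-κ)) nab, ← Real.rpow_mul hpR.le]
        ring_nf
      rw [e1, e2, e3]
      ring
  -- covering by the pairs
  set Ep : Finset (ℕ × ℕ) := G.E.filter (fun e => p ∣ e.1 * e.2 / Nat.gcd e.1 e.2 ^ 2)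
    with hEp
  set S : Finset (ℕ × ℕ) := (rng ×ˢ rng).filter (fun ab => ab.1 ≠ ab.2) with hS
  have hval : ∀ e ∈ G.E, e.1.factorization p < G.V.sup id + G.W.sup id + 1
      ∧ e.2.factorization p < G.V.sup id + G.W.sup id + 1 := by
    intro e he
    have heVW := G.E_sub he
    rw [Finset.mem_product] at heVW
    have h1 : 0 < e.1 := G.V_pos _ heVW.1
    have h2 : 0 < e.2 := G.W_pos _ heVW.2
    have h3 : e.1 ≤ G.V.sup id := Finset.le_sup (f := id) heVW.1
    have h4 : e.2 ≤ G.W.sup id := Finset.le_sup (f := id) heVW.2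
    have h5 : e.1.factorization p < e.1 := Nat.factorization_lt p h1.ne'
    have h6 : e.2.factorization p < e.2 := Nat.factorization_lt p h2.ne'
    omega
  have hcover : Ep ⊆ S.biUnion (fun ab => edgesAt G p ab.1 ab.2) := by
    intro e he
    rw [hEp, Finset.mem_filter] at he
    obtain ⟨heE, hep⟩ := he
    have heVW := G.E_sub heE
    rw [Finset.mem_product] at heVW
    have h1 : 0 < e.1 := G.V_pos _ heVW.1
    have h2 : 0 < e.2 := G.W_pos _ heVW.2
    have hne : e.1.factorization p ≠ e.2.factorization p := (dvd_quot_iff hp h1 h2).mp hep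
    rw [Finset.mem_biUnion]
    refine ⟨(e.1.factorization p, e.2.factorization p), ?_, ?_⟩
    · rw [hS, Finset.mem_filter, Finset.mem_product]
      have := hval e heE
      exact ⟨⟨Finset.mem_range.2 this.1, Finset.mem_range.2 this.2⟩, hne⟩
    · rw [edgesAt, Finset.mem_filter]
      refine ⟨heE, ?_, ?_⟩
      · rw [exactPart, Finset.mem_filter]
        exact ⟨heVW.1, Nat.ordProj_dvd _ _, Nat.pow_succ_factorization_not_dvd h1.ne' hp⟩
      · rw [exactPart, Finset.mem_filter]
        exact ⟨heVW.2, Nat.ordProj_dvd _ _, Nat.pow_succ_factorization_not_dvd h2.ne' hp⟩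
  have hdisjE : (S : Set (ℕ × ℕ)).PairwiseDisjoint (fun ab => edgesAt G p ab.1 ab.2) := by
    intro ab _ cd _ habcd
    have uniq : ∀ (a b n : ℕ), p ^ a ∣ n → ¬ p ^ (a+1) ∣ n → p ^ b ∣ n → ¬ p ^ (b+1) ∣ n
        → a = b := by
      intro a b n h1 h2 h3 h4
      rcases Nat.lt_or_ge a b with h | h
      · exact absurd (dvd_trans (pow_dvd_pow p h) h3) h2
      · rcases Nat.lt_or_ge b a with h' | h'
        · exact absurd (dvd_trans (pow_dvd_pow p h') h1) h4
        · omega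
    rw [Function.onFun, Finset.disjoint_left]
    intro e he1 he2
    rw [edgesAt, Finset.mem_filter] at he1 he2
    obtain ⟨-, hv1, hw1⟩ := he1
    obtain ⟨-, hv2, hw2⟩ := he2
    rw [exactPart, Finset.mem_filter] at hv1 hw1 hv2 hw2
    obtain ⟨-, hd1, hnd1⟩ := hv1
    obtain ⟨-, he1', hne1⟩ := hw1
    obtain ⟨-, hd2, hnd2⟩ := hv2
    obtain ⟨-, he2', hne2⟩ := hw2
    exact habcd (Prod.ext (uniq _ _ _ hd1 hnd1 hd2 hnd2) (uniq _ _ _ he1' hne1 he2' hne2))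
  -- assemble
  have hMκ : M ^ κ ≤ M := by
    calc M ^ κ ≤ M ^ (1:ℝ) :=
        Real.rpow_le_rpow_of_exponent_le (by linarith) hκ1
      _ = M := Real.rpow_one M
  have hMκ0 : (0:ℝ) ≤ M ^ κ := Real.rpow_nonneg (by linarith) _
  have hcθu : c ^ θ * u ≤ C2 τ M / (p:ℝ) := by
    have h1 : c ^ θ = C2 τ M ^ θ * ((p:ℝ) ^ θ)⁻¹ := by
      rw [hc, Real.div_rpow hC2pos.le hpR.le, div_eq_mul_inv]
    have h2 : C2 τ M ^ θ ≤ C2 τ M := by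
      calc C2 τ M ^ θ ≤ C2 τ M ^ (1:ℝ) :=
          Real.rpow_le_rpow_of_exponent_le hC2one hθ1
        _ = C2 τ M := Real.rpow_one _
    have h3 : ((p:ℝ) ^ θ)⁻¹ * u = ((p:ℝ))⁻¹ := by
      rw [hu, Real.rpow_neg hpR.le, ← mul_inv, ← Real.rpow_add hpR, hθκ1, Real.rpow_one]
    calc c ^ θ * u = C2 τ M ^ θ * (((p:ℝ) ^ θ)⁻¹ * u) := by rw [h1]; ring
      _ = C2 τ M ^ θ * ((p:ℝ))⁻¹ := by rw [h3]
      _ ≤ C2 τ M * ((p:ℝ))⁻¹ := by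
          exact mul_le_mul_of_nonneg_right h2 (by positivity)
      _ = C2 τ M / (p:ℝ) := by rw [div_eq_mul_inv]
  calc muEdges G.mu Ep ≤ muEdges G.mu (S.biUnion (fun ab => edgesAt G p ab.1 ab.2)) :=
        muEdges_mono hmu hcover
    _ = ∑ ab ∈ S, muEdges G.mu (edgesAt G p ab.1 ab.2) := by
        rw [muEdges, Finset.sum_biUnion hdisjE]
        rfl
    _ ≤ ∑ ab ∈ S, M ^ κ * muEdges G.mu G.E
          * ((x ab.1 * y ab.2) ^ θ * u ^ ((ab.1:ℤ) - (ab.2:ℤ)).natAbs) := by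
        refine Finset.sum_le_sum ?_
        intro ab hab
        rw [hS, Finset.mem_filter] at hab
        exact pair ab.1 ab.2 hab.2
    _ = M ^ κ * muEdges G.mu G.E
          * ∑ ab ∈ S, (x ab.1 * y ab.2) ^ θ * u ^ ((ab.1:ℤ) - (ab.2:ℤ)).natAbs := by
        rw [Finset.mul_sum]
    _ ≤ M ^ κ * muEdges G.mu G.E * (12 * (c ^ θ * u)) := by
        refine mul_le_mul_of_nonneg_left ?_ (mul_nonneg hMκ0 hME0)
        exact pair_sum_le hθhalf hθ1 hu0 huhalf hc0 hc1 hx0 hy0 hx1 hy1 hxs hys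
    _ ≤ M * muEdges G.mu G.E * (12 * (C2 τ M / (p:ℝ))) := by
        have h1 : M ^ κ * muEdges G.mu G.E ≤ M * muEdges G.mu G.E :=
          mul_le_mul_of_nonneg_right hMκ hME0
        have h2 : 12 * (c ^ θ * u) ≤ 12 * (C2 τ M / (p:ℝ)) := by linarith
        have h3 : (0:ℝ) ≤ 12 * (c ^ θ * u) := by
          have : (0:ℝ) ≤ c ^ θ := Real.rpow_nonneg hc0 _
          positivity
        have h4 : (0:ℝ) ≤ M * muEdges G.mu G.E := mul_nonneg (by linarith) hME0
        exact mul_le_mul h1 h2 h3 h4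
    _ = 12 * M * C2 τ M / (p:ℝ) * muEdges G.mu G.E := by ring

end Core
set_option maxHeartbeats 1600000 in
/-- Removing the effect of `R(G)` from `L_t(v,w)` (`Cosmetic-L`). -/
theorem cosmetic_L (τ M : ℝ) (hτ : τ ∈ Set.Ioo (0 : ℝ) (1 / 100)) (hM : 2 ≤ M)
    (G : GCDGraph) (hmax : IsMaximal τ G) (hδ : 0 < G.density)
    (s t : ℝ) (hs : 1 ≤ s) (ht : C6 τ M * s ≤ t)
    (hflat : Rflat τ M G = ∅)
    (hE : ∀ e ∈ G.E, 1 / s ≤ Lfun t e.1 e.2) :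
    ∃ G' : GCDGraph, IsSubgraph G' G ∧
      G'.V = G.V ∧ G'.W = G.W ∧ G'.E ⊆ G.E ∧ G'.P = G.P ∧ G'.f = G.f ∧ G'.g = G.g ∧
      quality τ G / 2 ≤ quality τ G' ∧ 0 < quality τ G / 2 ∧
      ∀ e ∈ G'.E, 1 / (2 * s) ≤ LfunRes t (R G) e.1 e.2 := by
  classical
  obtain ⟨hτ0, hτ1⟩ := hτ
  have hmu := G.mu_nonneg
  have hs0 : (0:ℝ) < s := by linarith
  -- positivity of the basic measures
  have hδ' : 0 < muEdges G.mu G.E / (muSet G.mu G.V * muSet G.mu G.W) := hδ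
  have hVW : 0 < muSet G.mu G.V * muSet G.mu G.W := by
    by_contra h
    push_neg at h
    rcases eq_or_lt_of_le h with h' | h'
    · rw [h', div_zero] at hδ'; exact lt_irrefl 0 hδ'
    · nlinarith [muSet_nonneg hmu G.V, muSet_nonneg hmu G.W]
  have hME : 0 < muEdges G.mu G.E := by
    by_contra h
    push_neg at h
    have : muEdges G.mu G.E / (muSet G.mu G.V * muSet G.mu G.W) ≤ 0 :=
      div_nonpos_of_nonpos_of_nonneg h hVW.le
    linarith
  have hμV : 0 < muSet G.mu G.V := by
    rcases (mul_pos_iff.mp hVW) with ⟨h1, _⟩ | ⟨h1, _⟩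
    · exact h1
    · exact absurd h1 (not_lt.2 (muSet_nonneg hmu G.V))
  have hμW : 0 < muSet G.mu G.W := by
    rcases (mul_pos_iff.mp hVW) with ⟨_, h1⟩ | ⟨_, h1⟩
    · exact h1
    · exact absurd h1 (not_lt.2 (muSet_nonneg hmu G.W))
  -- constants
  have hC2pos : 0 < C2 τ M := C2_pos hτ0 hM
  have hC2one : 1 ≤ C2 τ M := C2_one_le hτ0 hτ1 hM
  have hC6big : 10^4 * M * C2 τ M ≤ C6 τ M := by
    rw [C6]
    exact le_trans (le_max_left _ _) (le_max_right _ _)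
  have hC6pos : (0:ℝ) < C6 τ M := by nlinarith
  have hC6t : C6 τ M ≤ t := by nlinarith
  have ht2 : (2:ℝ) ≤ t := by nlinarith
  have ht0 : (0:ℝ) < t := by linarith
  -- the subgraph
  set E' : Finset (ℕ × ℕ) := G.E.filter (fun e => 1/(2*s) ≤ LfunRes t (R G) e.1 e.2) with hE'
  set Ebad : Finset (ℕ × ℕ) :=
    G.E.filter (fun e => ¬ (1/(2*s) ≤ LfunRes t (R G) e.1 e.2)) with hEbad
  -- bad edges have a large sum over R(G)
  have hbadsum : ∀ e ∈ Ebad, 1/(2*s) ≤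
      ∑ p ∈ (e.1 * e.2 / Nat.gcd e.1 e.2 ^ 2).primeFactors.filter
        (fun p : ℕ => t < (p:ℝ) ∧ p ∈ R G), (1:ℝ)/p := by
    intro e he
    rw [hEbad, Finset.mem_filter] at he
    obtain ⟨heE, heb⟩ := he
    push_neg at heb
    have h1 := hE e heE
    have hsplit : Lfun t e.1 e.2
        = (∑ p ∈ (e.1 * e.2 / Nat.gcd e.1 e.2 ^ 2).primeFactors.filter
            (fun p : ℕ => t < (p:ℝ) ∧ p ∈ R G), (1:ℝ)/p)
          + LfunRes t (R G) e.1 e.2 := by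
      rw [Lfun, LfunRes]
      rw [← Finset.sum_filter_add_sum_filter_not
        ((e.1 * e.2 / Nat.gcd e.1 e.2 ^ 2).primeFactors.filter (fun p : ℕ => t < (p:ℝ)))
        (fun p => p ∈ R G) (fun p => (1:ℝ)/p)]
      rw [Finset.filter_filter, Finset.filter_filter]
    have h2 : 1/s - 1/(2*s) ≤ ∑ p ∈ (e.1 * e.2 / Nat.gcd e.1 e.2 ^ 2).primeFactors.filter
        (fun p : ℕ => t < (p:ℝ) ∧ p ∈ R G), (1:ℝ)/p := by
      rw [hsplit] at h1
      linarith
    have h3 : 1/(2*s) ≤ 1/s - 1/(2*s) := by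
      rw [div_sub_div _ _ (ne_of_gt hs0) (by positivity : (2*s) ≠ 0)]
      rw [div_le_div_iff₀ (by positivity) (by positivity)]
      ring_nf
      nlinarith
    linarith
  -- the finite set of relevant primes
  set Q : Finset ℕ := G.E.biUnion (fun e =>
    (e.1 * e.2 / Nat.gcd e.1 e.2 ^ 2).primeFactors.filter
      (fun p : ℕ => t < (p:ℝ) ∧ p ∈ R G)) with hQ
  have hQprop : ∀ p ∈ Q, p.Prime ∧ t < (p:ℝ) ∧ p ∈ R G := by
    intro p hp
    rw [hQ, Finset.mem_biUnion] at hp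
    obtain ⟨e, _, hpe⟩ := hp
    rw [Finset.mem_filter] at hpe
    exact ⟨Nat.prime_of_mem_primeFactors hpe.1, hpe.2⟩
  -- per-prime bound
  have hprime : ∀ p ∈ Q,
      muEdges G.mu (G.E.filter (fun e => p ∣ e.1 * e.2 / Nat.gcd e.1 e.2 ^ 2))
        ≤ 12 * M * C2 τ M / (p:ℝ) * muEdges G.mu G.E := by
    intro p hpQ
    obtain ⟨hpp, hpt, hpR⟩ := hQprop p hpQ
    have hsharp : p ∈ Rsharp τ M G := (Set.diff_eq_empty.mp hflat) hpR
    obtain ⟨hpR', ⟨k, hk1, hk2⟩, hqual⟩ := hsharp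
    obtain ⟨_, hpP, _⟩ := hpR'
    have hpbig : (8:ℝ) ≤ (p:ℝ) := by nlinarith
    have hC2p : C2 τ M ≤ (p:ℝ) := by nlinarith
    exact edge_part_bound τ M ⟨hτ0, hτ1⟩ hM G p hpp hpP hμV hμW hpbig hC2p k hk1 hk2 hqual
  -- the key estimate
  have key : muEdges G.mu Ebad ≤ (1/100) * muEdges G.mu G.E := by
    have step1 : muEdges G.mu Ebad ≤ 2*s * ∑ e ∈ Ebad,
        ∑ p ∈ (e.1 * e.2 / Nat.gcd e.1 e.2 ^ 2).primeFactors.filter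
          (fun p : ℕ => t < (p:ℝ) ∧ p ∈ R G), (G.mu e.1 * G.mu e.2) / p := by
      rw [muEdges, Finset.mul_sum]
      refine Finset.sum_le_sum ?_
      intro e he
      have h1 := hbadsum e he
      have h2 : 0 ≤ G.mu e.1 * G.mu e.2 := mul_nonneg (hmu _) (hmu _)
      have h3 : ∑ p ∈ (e.1 * e.2 / Nat.gcd e.1 e.2 ^ 2).primeFactors.filter
          (fun p : ℕ => t < (p:ℝ) ∧ p ∈ R G), (G.mu e.1 * G.mu e.2) / p
          = (G.mu e.1 * G.mu e.2) * ∑ p ∈ (e.1 * e.2 / Nat.gcd e.1 e.2 ^ 2).primeFactors.filter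
            (fun p : ℕ => t < (p:ℝ) ∧ p ∈ R G), (1:ℝ)/p := by
        rw [Finset.mul_sum]
        exact Finset.sum_congr rfl (fun p _ => (mul_one_div _ _).symm)
      rw [h3]
      calc G.mu e.1 * G.mu e.2 = (G.mu e.1 * G.mu e.2) * 1 := by ring
        _ ≤ (G.mu e.1 * G.mu e.2) * (2*s * ∑ p ∈ (e.1 * e.2 / Nat.gcd e.1 e.2 ^ 2).primeFactors.filter
            (fun p : ℕ => t < (p:ℝ) ∧ p ∈ R G), (1:ℝ)/p) := by
          refine mul_le_mul_of_nonneg_left ?_ h2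
          calc (1:ℝ) = 2*s * (1/(2*s)) := by field_simp
            _ ≤ _ := by
              refine mul_le_mul_of_nonneg_left h1 (by positivity)
        _ = 2*s * ((G.mu e.1 * G.mu e.2) * ∑ p ∈ (e.1 * e.2 / Nat.gcd e.1 e.2 ^ 2).primeFactors.filter
            (fun p : ℕ => t < (p:ℝ) ∧ p ∈ R G), (1:ℝ)/p) := by ring
    have hFeQ : ∀ e ∈ Ebad, (e.1 * e.2 / Nat.gcd e.1 e.2 ^ 2).primeFactors.filter
        (fun p : ℕ => t < (p:ℝ) ∧ p ∈ R G) ⊆ Q := by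
      intro e he p hp
      rw [hQ, Finset.mem_biUnion]
      exact ⟨e, Finset.filter_subset _ _ he, hp⟩
    have step2 : ∑ e ∈ Ebad, ∑ p ∈ (e.1 * e.2 / Nat.gcd e.1 e.2 ^ 2).primeFactors.filter
          (fun p : ℕ => t < (p:ℝ) ∧ p ∈ R G), (G.mu e.1 * G.mu e.2) / p
        = ∑ p ∈ Q, ∑ e ∈ Ebad,
            (if p ∈ (e.1 * e.2 / Nat.gcd e.1 e.2 ^ 2).primeFactors.filter
              (fun p : ℕ => t < (p:ℝ) ∧ p ∈ R G) then (G.mu e.1 * G.mu e.2) / p else 0) := by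
      rw [← Finset.sum_comm]
      refine Finset.sum_congr rfl ?_
      intro e he
      rw [Finset.sum_ite_mem, Finset.inter_eq_right.mpr (hFeQ e he)]
    have step3 : ∀ p ∈ Q, ∑ e ∈ Ebad,
        (if p ∈ (e.1 * e.2 / Nat.gcd e.1 e.2 ^ 2).primeFactors.filter
          (fun p : ℕ => t < (p:ℝ) ∧ p ∈ R G) then (G.mu e.1 * G.mu e.2) / p else 0)
        ≤ 12 * M * C2 τ M / (p:ℝ)^2 * muEdges G.mu G.E := by
      intro p hpQ
      obtain ⟨hpp, hpt, hpR⟩ := hQprop p hpQ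
      have hpR0 : (0:ℝ) < (p:ℝ) := by exact_mod_cast hpp.pos
      have h1 : ∑ e ∈ Ebad,
          (if p ∈ (e.1 * e.2 / Nat.gcd e.1 e.2 ^ 2).primeFactors.filter
            (fun p : ℕ => t < (p:ℝ) ∧ p ∈ R G) then (G.mu e.1 * G.mu e.2) / p else 0)
          = ∑ e ∈ Ebad.filter (fun e => p ∈ (e.1 * e.2 / Nat.gcd e.1 e.2 ^ 2).primeFactors.filter
            (fun p : ℕ => t < (p:ℝ) ∧ p ∈ R G)), (G.mu e.1 * G.mu e.2) / p :=
        (Finset.sum_filter _ _).symm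
      have hsub : Ebad.filter (fun e => p ∈ (e.1 * e.2 / Nat.gcd e.1 e.2 ^ 2).primeFactors.filter
            (fun p : ℕ => t < (p:ℝ) ∧ p ∈ R G))
          ⊆ G.E.filter (fun e => p ∣ e.1 * e.2 / Nat.gcd e.1 e.2 ^ 2) := by
        intro e he
        rw [Finset.mem_filter] at he ⊢
        obtain ⟨he1, he2⟩ := he
        rw [Finset.mem_filter] at he2
        exact ⟨Finset.filter_subset _ _ he1, Nat.dvd_of_mem_primeFactors he2.1⟩
      have h2 : ∑ e ∈ Ebad.filter (fun e => p ∈ (e.1 * e.2 / Nat.gcd e.1 e.2 ^ 2).primeFactors.filter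
            (fun p : ℕ => t < (p:ℝ) ∧ p ∈ R G)), (G.mu e.1 * G.mu e.2) / p
          = muEdges G.mu (Ebad.filter (fun e => p ∈ (e.1 * e.2 / Nat.gcd e.1 e.2 ^ 2).primeFactors.filter
            (fun p : ℕ => t < (p:ℝ) ∧ p ∈ R G))) / p := by
        rw [muEdges, Finset.sum_div]
      rw [h1, h2]
      have h3 : muEdges G.mu (Ebad.filter (fun e => p ∈ (e.1 * e.2 / Nat.gcd e.1 e.2 ^ 2).primeFactors.filter
            (fun p : ℕ => t < (p:ℝ) ∧ p ∈ R G)))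
          ≤ 12 * M * C2 τ M / (p:ℝ) * muEdges G.mu G.E :=
        le_trans (muEdges_mono hmu hsub) (hprime p hpQ)
      calc muEdges G.mu (Ebad.filter (fun e => p ∈ (e.1 * e.2 / Nat.gcd e.1 e.2 ^ 2).primeFactors.filter
            (fun p : ℕ => t < (p:ℝ) ∧ p ∈ R G))) / p
          ≤ (12 * M * C2 τ M / (p:ℝ) * muEdges G.mu G.E) / p := by gcongr
        _ = 12 * M * C2 τ M / (p:ℝ)^2 * muEdges G.mu G.E := by
            field_simp
            try ring
    have hsum_inv : ∑ p ∈ Q, 1/((p:ℝ))^2 ≤ 2/t :=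
      sum_inv_sq_le ht2 Q (fun p hp => (hQprop p hp).2.1)
    have hME0 : 0 ≤ muEdges G.mu G.E := hME.le
    calc muEdges G.mu Ebad
        ≤ 2*s * ∑ e ∈ Ebad, ∑ p ∈ (e.1 * e.2 / Nat.gcd e.1 e.2 ^ 2).primeFactors.filter
            (fun p : ℕ => t < (p:ℝ) ∧ p ∈ R G), (G.mu e.1 * G.mu e.2) / p := step1
      _ = 2*s * ∑ p ∈ Q, ∑ e ∈ Ebad,
            (if p ∈ (e.1 * e.2 / Nat.gcd e.1 e.2 ^ 2).primeFactors.filter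
              (fun p : ℕ => t < (p:ℝ) ∧ p ∈ R G) then (G.mu e.1 * G.mu e.2) / p else 0) := by
          rw [step2]
      _ ≤ 2*s * ∑ p ∈ Q, 12 * M * C2 τ M / (p:ℝ)^2 * muEdges G.mu G.E := by
          refine mul_le_mul_of_nonneg_left (Finset.sum_le_sum step3) (by positivity)
      _ = 2*s * (12 * M * C2 τ M * muEdges G.mu G.E) * ∑ p ∈ Q, 1/((p:ℝ))^2 := by
          rw [Finset.mul_sum, Finset.mul_sum]
          refine Finset.sum_congr rfl (fun p hp => ?_)
          have hp0 : (0:ℝ) < (p:ℝ) := by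
            have := (hQprop p hp).1.two_le
            positivity
          field_simp
          try ring
      _ ≤ 2*s * (12 * M * C2 τ M * muEdges G.mu G.E) * (2/t) := by
          refine mul_le_mul_of_nonneg_left hsum_inv ?_
          positivity
      _ ≤ (1/100) * muEdges G.mu G.E := by
          rw [show 2*s * (12 * M * C2 τ M * muEdges G.mu G.E) * (2/t)
            = (48 * s * M * C2 τ M / t) * muEdges G.mu G.E by ring]
          refine mul_le_mul_of_nonneg_right ?_ hME0
          rw [div_le_div_iff₀ ht0 (by norm_num : (0:ℝ) < 100)]
          have h1 : 10^4 * M * C2 τ M * s ≤ C6 τ M * s :=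
            mul_le_mul_of_nonneg_right hC6big (by linarith)
          nlinarith [mul_pos (mul_pos (by linarith : (0:ℝ) < M) hC2pos) hs0]
  -- measures of the good edge set
  have hsum : muEdges G.mu E' + muEdges G.mu Ebad = muEdges G.mu G.E := by
    rw [hE', hEbad, muEdges, muEdges, muEdges, Finset.sum_filter_add_sum_filter_not]
  have hE'0 : 0 ≤ muEdges G.mu E' := muEdges_nonneg hmu _
  have hE'ge : (99/100) * muEdges G.mu G.E ≤ muEdges G.mu E' := by linarith
  -- quality comparison
  set Pi : ℝ := ∏ q ∈ G.P, Phi τ G.f G.g q with hPi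
  have hPipos : 0 < Pi := Finset.prod_pos (fun q hq => Phi_pos hτ0 (G.P_prime q hq))
  have hd0 : 0 < densityRaw G.mu G.V G.W G.E := hδ
  have h2τ : (0:ℝ) < 2 + τ := by linarith
  have hd'ge : (99/100) * densityRaw G.mu G.V G.W G.E ≤ densityRaw G.mu G.V G.W E' := by
    rw [densityRaw, densityRaw]
    rw [show (99/100 : ℝ) * (muEdges G.mu G.E / (muSet G.mu G.V * muSet G.mu G.W))
      = ((99/100) * muEdges G.mu G.E) / (muSet G.mu G.V * muSet G.mu G.W) by ring]
    gcongr
  have hd'0 : 0 ≤ densityRaw G.mu G.V G.W E' :=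
    div_nonneg hE'0 hVW.le
  have h99 : (1/2:ℝ) ≤ (99/100:ℝ) ^ ((2:ℝ)+τ) := by
    have h1 : ((99:ℝ)/100) ^ ((3:ℝ)) ≤ (99/100:ℝ) ^ ((2:ℝ)+τ) :=
      Real.rpow_le_rpow_of_exponent_ge (by norm_num) (by norm_num) (by linarith)
    have h2 : ((99:ℝ)/100) ^ ((3:ℝ)) = ((99:ℝ)/100) ^ (3:ℕ) := by
      rw [← Real.rpow_natCast]
      norm_num
    rw [h2] at h1
    norm_num at h1
    linarith
  have hd'rpow : (1/2) * densityRaw G.mu G.V G.W G.E ^ ((2:ℝ)+τ)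
      ≤ densityRaw G.mu G.V G.W E' ^ ((2:ℝ)+τ) := by
    calc (1/2) * densityRaw G.mu G.V G.W G.E ^ ((2:ℝ)+τ)
        ≤ (99/100:ℝ) ^ ((2:ℝ)+τ) * densityRaw G.mu G.V G.W G.E ^ ((2:ℝ)+τ) :=
          mul_le_mul_of_nonneg_right h99 (Real.rpow_nonneg hd0.le _)
      _ = ((99/100) * densityRaw G.mu G.V G.W G.E) ^ ((2:ℝ)+τ) :=
          (Real.mul_rpow (by norm_num) hd0.le).symm
      _ ≤ densityRaw G.mu G.V G.W E' ^ ((2:ℝ)+τ) :=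
          Real.rpow_le_rpow (by positivity) hd'ge (by linarith)
  have hqG : quality τ G
      = densityRaw G.mu G.V G.W G.E ^ ((2:ℝ)+τ) * muSet G.mu G.V * muSet G.mu G.W * Pi := rfl
  have hqGpos : 0 < quality τ G := by
    rw [hqG]
    have h1 : 0 < densityRaw G.mu G.V G.W G.E ^ ((2:ℝ)+τ) := Real.rpow_pos_of_pos hd0 _
    exact mul_pos (mul_pos (mul_pos h1 hμV) hμW) hPipos
  have hqual2 : quality τ G / 2 ≤ qualityRaw τ G.mu G.V G.W E' G.P G.f G.g := by
    rw [qualityRaw_eq, hqG]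
    have h1 := mul_le_mul_of_nonneg_right hd'rpow
      (mul_nonneg (mul_nonneg hμV.le hμW.le) hPipos.le)
    calc densityRaw G.mu G.V G.W G.E ^ ((2:ℝ)+τ) * muSet G.mu G.V * muSet G.mu G.W * Pi / 2
        = (1/2) * densityRaw G.mu G.V G.W G.E ^ ((2:ℝ)+τ)
          * (muSet G.mu G.V * muSet G.mu G.W * Pi) := by ring
      _ ≤ densityRaw G.mu G.V G.W E' ^ ((2:ℝ)+τ)
          * (muSet G.mu G.V * muSet G.mu G.W * Pi) := h1
      _ = densityRaw G.mu G.V G.W E' ^ ((2:ℝ)+τ) * muSet G.mu G.V * muSet G.mu G.W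
          * (∏ q ∈ G.P, Phi τ G.f G.g q) := by rw [← hPi]; ring
  -- construct the subgraph and conclude
  refine ⟨{ G with E := E', E_sub := fun e he => G.E_sub (Finset.filter_subset _ _ he), gcd_exact := fun q hq e he => G.gcd_exact q hq e (Finset.filter_subset _ _ he) }, ⟨rfl, subset_rfl, subset_rfl, Finset.filter_subset _ _, subset_rfl, fun _ _ => rfl, fun _ _ => rfl⟩, rfl, rfl, Finset.filter_subset _ _, rfl, rfl, rfl, ?_, ?_, ?_⟩
  · exact hqual2
  · positivity
  · intro e he
    have he' : e ∈ E' := he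
    rw [hE', Finset.mem_filter] at he'
    exact he'.2
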